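/- The n-th derivative of a composition of an analytic function at a point equals the n-th coefficient (times n!) of the composition of the formal Taylor series: (f∘g)⁽ⁿ⁾(x₀) = n! · [hⁿ] (T_{g(x₀)}f ∘ (T_{x₀}g − g(x₀))), for f, g real-analytic near the relevant points. -/

import Mathlib

open PowerSeries

/-- Composition of formal power series (well defined when the constant term of `G`
is zero): the `n`-th coefficient only depends on the powers `G^k` for `k ≤ n`. -/
noncomputable def formalComp (F G : PowerSeries ℝ) : PowerSeries ℝ :=
  PowerSeries.mk fun n =>
    PowerSeries.coeff n
      (∑ k ∈ Finset.range (n + 1), PowerSeries.C (PowerSeries.coeff k F) * G ^ k)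

/-- Formal Taylor series of `f` at `x₀`. -/
noncomputable def taylorPS (f : ℝ → ℝ) (x₀ : ℝ) : PowerSeries ℝ :=
  PowerSeries.mk fun n => iteratedDeriv n f x₀ / n.factorial

open Finset

lemma iteratedDeriv_eq_coeff' {f : ℝ → ℝ} {p : FormalMultilinearSeries ℝ ℝ ℝ} {x : ℝ}
    (h : HasFPowerSeriesAt f p x) (n : ℕ) :
    iteratedDeriv n f x = (n.factorial : ℝ) * p.coeff n := by
  obtain ⟨r, hr⟩ := h
  have h2 := hr.factorial_smul (1 : ℝ) n
  rw [iteratedDeriv_eq_iteratedFDeriv, ← h2, nsmul_eq_mul]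
  rfl

lemma coeff_comp' (p q : FormalMultilinearSeries ℝ ℝ ℝ) (n : ℕ) :
    (p.comp q).coeff n =
      ∑ c : Composition n, p.coeff c.length * ∏ i, q.coeff (c.blocksFun i) := by
  rw [FormalMultilinearSeries.coeff]
  show (∑ c : Composition n, p.compAlongComposition q c) _ = _
  rw [ContinuousMultilinearMap.sum_apply]
  refine Finset.sum_congr rfl fun c _ => ?_
  rw [FormalMultilinearSeries.compAlongComposition_apply]
  have hv : q.applyComposition c 1 = fun i => (q.coeff (c.blocksFun i)) := by
    funext i
    rw [FormalMultilinearSeries.applyComposition]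
    rw [FormalMultilinearSeries.apply_eq_prod_smul_coeff]
    simp [Function.comp]
  rw [hv]
  have := p.apply_eq_prod_smul_coeff (n := c.length) (y := fun i => q.coeff (c.blocksFun i))
  rw [this, smul_eq_mul, mul_comm]

lemma list_getD_sum (L : List ℕ) : ∑ i ∈ range L.length, L.getD i 0 = L.sum := by
  induction L with
  | nil => simp
  | cons a t ih =>
    rw [List.length_cons, Finset.sum_range_succ']
    simp only [List.getD_cons_succ, List.getD_cons_zero, List.sum_cons, ih]
    ring

lemma list_map_range_getD (L : List ℕ) :
    (List.range L.length).map (fun i => L.getD i 0) = L := by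
  apply List.ext_getElem
  · simp
  · intro i h1 h2
    simp [List.getD_eq_getElem, List.getElem?_eq_getElem h2]

/-- Composition from a finsupp supported on `range k` with all values positive. -/
noncomputable def compOfFinsupp (n k : ℕ) (l : ℕ →₀ ℕ) (h1 : ∑ i ∈ range k, l i = n)
    (h2 : ∀ i ∈ range k, l i ≠ 0) : Composition n where
  blocks := (List.range k).map l
  blocks_pos := by
    intro j hj
    simp only [List.mem_map, List.mem_range] at hj
    obtain ⟨i, hi, rfl⟩ := hj
    exact Nat.pos_of_ne_zero (h2 i (mem_range.2 hi))
  blocks_sum := by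
    rw [← h1]
    have : ∀ m : ℕ, ((List.range m).map l).sum = ∑ i ∈ range m, l i := by
      intro m
      induction m with
      | zero => simp
      | succ m ih => rw [List.range_succ, List.map_append, List.sum_append,
          Finset.sum_range_succ, ih]; simp
    exact this k

noncomputable def finsuppOfComp {n : ℕ} (c : Composition n) : ℕ →₀ ℕ :=
  Finsupp.onFinset (range c.length) (fun i => c.blocks.getD i 0)
    (fun i hi => by
      rw [mem_range]
      by_contra h
      exact hi (List.getD_eq_default _ _ (by simpa [Composition.blocks_length] using not_lt.1 h)))

lemma coeff_sum_pow (a : ℕ → ℝ) (S : PowerSeries ℝ) (hS : PowerSeries.constantCoeff S = 0)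
    (n : ℕ) :
    PowerSeries.coeff n (∑ k ∈ range (n + 1), PowerSeries.C (a k) * S ^ k) =
      ∑ c : Composition n, a c.length * ∏ i, PowerSeries.coeff (c.blocksFun i) S := by
  have hc0 : PowerSeries.coeff 0 S = 0 := by simpa using hS
  rw [map_sum]
  simp only [PowerSeries.coeff_C_mul, PowerSeries.coeff_pow]
  rw [← Finset.sum_fiberwise_of_maps_to
    (g := fun c : Composition n => c.length) (t := range (n+1))
    (fun c _ => mem_range.2 (Nat.lt_succ_of_le c.length_le))
    (fun c => a c.length * ∏ i, PowerSeries.coeff (c.blocksFun i) S)]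
  refine Finset.sum_congr rfl fun k hk => ?_
  rw [Finset.mul_sum]
  rw [← Finset.sum_filter_of_ne (p := fun l : ℕ →₀ ℕ => ∀ i ∈ range k, l i ≠ 0)
    (fun l hl hne i hi hzero => hne (by
      rw [mul_eq_zero]
      right
      exact Finset.prod_eq_zero hi (by rw [hzero, hc0])))]
  refine Finset.sum_bij'
    (i := fun l hl => compOfFinsupp n k l
      (mem_finsuppAntidiag.1 (mem_filter.1 hl).1).1
      (mem_filter.1 hl).2)
    (j := fun c _ => finsuppOfComp c) ?_ ?_ ?_ ?_ ?_
  · intro l hl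
    refine mem_filter.2 ⟨mem_univ _, ?_⟩
    simp [compOfFinsupp, Composition.length]
  · intro c hc
    have hck : c.length = k := (mem_filter.1 hc).2
    subst hck
    rw [mem_filter]
    refine ⟨mem_finsuppAntidiag.2 ⟨?_, Finsupp.support_onFinset_subset⟩, ?_⟩
    · have heq : ∀ i ∈ range c.length, (finsuppOfComp c) i = c.blocks.getD i 0 := fun i _ => rfl
      rw [Finset.sum_congr rfl heq]
      have h3 := list_getD_sum c.blocks
      rw [Composition.blocks_length] at h3
      rw [h3, c.blocks_sum]
    · intro i hi
      have h4 : i < c.blocks.length := by simpa [Composition.blocks_length] using mem_range.1 hi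
      have : (finsuppOfComp c) i = c.blocks.getD i 0 := rfl
      rw [this, List.getD_eq_getElem _ _ h4]
      exact (c.blocks_pos' _ h4).ne'
  · intro l hl
    have hsupp := (mem_finsuppAntidiag.1 (mem_filter.1 hl).1).2
    ext i
    show ((compOfFinsupp n k l _ _).blocks).getD i 0 = l i
    show (((List.range k).map l).getD i 0) = l i
    by_cases h : i < k
    · rw [List.getD_eq_getElem _ _ (by simpa using h)]
      simp
    · rw [List.getD_eq_default _ _ (by simpa using not_lt.1 h)]
      symm
      rw [← Finsupp.notMem_support_iff]
      intro hmem
      exact h (mem_range.1 (hsupp hmem))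
  · intro c hc
    have hck : c.length = k := (mem_filter.1 hc).2
    subst hck
    apply Composition.ext
    show (List.range c.length).map (fun i => c.blocks.getD i 0) = c.blocks
    have := list_map_range_getD c.blocks
    rwa [Composition.blocks_length] at this
  · intro l hl
    have hlen : (compOfFinsupp n k l (mem_finsuppAntidiag.1 (mem_filter.1 hl).1).1
        (mem_filter.1 hl).2).length = k := by
      simp [compOfFinsupp, Composition.length]
    congr 1
    · rw [hlen]
    · have hfun : ∀ (c : Composition n), ∏ i, PowerSeries.coeff (c.blocksFun i) S
          = ∏ i ∈ range c.length, PowerSeries.coeff (c.blocks.getD i 0) S := by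
        intro c
        rw [← Fin.prod_univ_eq_prod_range]
        apply Finset.prod_congr rfl
        intro i _
        congr 1
        rw [List.getD_eq_getElem _ _ (by simpa [Composition.blocks_length] using i.2)]
        rfl
      rw [hfun, hlen]
      apply Finset.prod_congr rfl
      intro i hi
      congr 2
      symm
      show (((List.range k).map l).getD i 0) = l i
      rw [List.getD_eq_getElem _ _ (by simpa using mem_range.1 hi)]
      simp

lemma taylorPS_coeff_eq {f : ℝ → ℝ} {p : FormalMultilinearSeries ℝ ℝ ℝ} {x : ℝ}
    (h : HasFPowerSeriesAt f p x) (k : ℕ) :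
    PowerSeries.coeff k (taylorPS f x) = p.coeff k := by
  rw [taylorPS, PowerSeries.coeff_mk, iteratedDeriv_eq_coeff' h]
  field_simp

/-- The `n`-th derivative of a composition of analytic functions equals `n!` times the
`n`-th coefficient of the composition of the corresponding formal Taylor series. -/
theorem iteratedDeriv_comp_eq_coeff_formalComp (f g : ℝ → ℝ) (x₀ : ℝ) (n : ℕ)
    (hf : AnalyticAt ℝ f (g x₀)) (hg : AnalyticAt ℝ g x₀) :
    iteratedDeriv n (f ∘ g) x₀ =
      (n.factorial : ℝ) *
        PowerSeries.coeff n
          (formalComp (taylorPS f (g x₀)) (taylorPS g x₀ - PowerSeries.C (g x₀))) := by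
  obtain ⟨p, hp⟩ := hf
  obtain ⟨q, hq⟩ := hg
  set Q : PowerSeries ℝ := taylorPS g x₀ - PowerSeries.C (g x₀) with hQ
  have hQ0 : PowerSeries.constantCoeff Q = 0 := by
    rw [hQ]
    rw [map_sub]
    rw [← PowerSeries.coeff_zero_eq_constantCoeff_apply, ← PowerSeries.coeff_zero_eq_constantCoeff_apply]
    rw [taylorPS, PowerSeries.coeff_mk]
    simp
  have hQc : ∀ j : ℕ, 1 ≤ j → PowerSeries.coeff j Q = q.coeff j := by
    intro j hj
    rw [hQ, map_sub, taylorPS_coeff_eq hq, PowerSeries.coeff_C,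
      if_neg (by omega), sub_zero]
  rw [iteratedDeriv_eq_coeff' (hp.comp hq) n, coeff_comp']
  congr 1
  rw [formalComp, PowerSeries.coeff_mk,
    coeff_sum_pow (fun k => PowerSeries.coeff k (taylorPS f (g x₀))) Q hQ0 n]
  refine Finset.sum_congr rfl fun c _ => ?_
  rw [taylorPS_coeff_eq hp]
  congr 1
  refine Finset.prod_congr rfl fun i _ => ?_
  rw [hQc _ (c.one_le_blocksFun i)]
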